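/- Let (G,N,M) be a Frobenius triple in a finite group G, and let H ≤ G be a subgroup satisfying G = HN and H ∩ M = 1. Then (HM, (H ∩ N)M, M) is a Frobenius triple; that is, M and (H ∩ N)M are nontrivial proper normal subgroups of HM with M ≤ (H ∩ N)M, and C_{HM}(x) ≤ (H ∩ N)M for every nonidentity x ∈ M. -/

import Mathlib

/-- `(G, N, M)` is a Frobenius triple: `M` and `N` are nontrivial proper normal
subgroups of `G` with `M ≤ N`, and `C_G(x) ≤ N` for every nonidentity `x ∈ M`. -/
def IsFrobeniusTriple {G : Type*} [Group G] (N M : Subgroup G) : Prop :=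
  N.Normal ∧ M.Normal ∧ N ≠ ⊥ ∧ N ≠ ⊤ ∧ M ≠ ⊥ ∧ M ≠ ⊤ ∧ M ≤ N ∧
    ∀ x ∈ M, x ≠ 1 → Subgroup.centralizer {x} ≤ N

/-- `(G, N, M)` is a Camina triple: `M` and `N` are nontrivial proper normal
subgroups of `G` with `M ≤ N`, and every `g ∈ G \ N` is conjugate to `g * m`
for every `m ∈ M`. -/
def IsCaminaTriple {G : Type*} [Group G] (N M : Subgroup G) : Prop :=
  N.Normal ∧ M.Normal ∧ N ≠ ⊥ ∧ N ≠ ⊤ ∧ M ≠ ⊥ ∧ M ≠ ⊤ ∧ M ≤ N ∧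
    ∀ g : G, g ∉ N → ∀ m ∈ M, IsConj g (g * m)

private lemma mem_sup_of_normal {G : Type*} [Group G] {A M : Subgroup G} (hMn : M.Normal)
    {x : G} (hx : x ∈ A ⊔ M) : ∃ a ∈ A, ∃ b ∈ M, x = a * b := by
  haveI := hMn
  have : x ∈ (↑(A ⊔ M) : Set G) := hx
  rw [Subgroup.mul_normal] at this
  obtain ⟨a, ha, b, hb, rfl⟩ := this
  exact ⟨a, ha, b, hb, rfl⟩

theorem frobenius_triple_pseudo_complement_restrict {G : Type*} [Group G] [Fintype G]
    (N M : Subgroup G) (hF : IsFrobeniusTriple N M) (H : Subgroup G)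
    (hHN : ∀ g : G, ∃ h ∈ H, ∃ n ∈ N, g = h * n) (hHM : H ⊓ M = ⊥) :
    IsFrobeniusTriple (((H ⊓ N) ⊔ M).subgroupOf (H ⊔ M)) (M.subgroupOf (H ⊔ M)) := by
  obtain ⟨hNn, hMn, hNbot, hNtop, hMbot, hMtop, hMN, hcent⟩ := hF
  set K := H ⊔ M with hK
  set L := (H ⊓ N) ⊔ M with hLdef
  have hMK : M ≤ K := le_sup_right
  have hML : M ≤ L := le_sup_right
  have hLK : L ≤ K := sup_le (le_trans inf_le_left le_sup_left) le_sup_right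
  have hLN : L ≤ N := sup_le inf_le_right hMN
  -- an element of H not in N
  have hHnN : ¬ H ≤ N := by
    intro hle
    apply hNtop
    rw [eq_top_iff]
    intro g _
    obtain ⟨a, ha, b, hb, rfl⟩ := hHN g
    exact N.mul_mem (hle ha) hb
  obtain ⟨h0, hh0H, hh0N⟩ := SetLike.not_le_iff_exists.mp hHnN
  -- conjugation by elements of H preserves L
  have keyH : ∀ h' ∈ H, ∀ x ∈ L, h' * x * h'⁻¹ ∈ L := by
    intro h' hh' x hx
    obtain ⟨a, ha, b, hb, rfl⟩ := mem_sup_of_normal hMn hx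
    have : h' * (a * b) * h'⁻¹ = (h' * a * h'⁻¹) * (h' * b * h'⁻¹) := by group
    rw [this]
    refine L.mul_mem (Subgroup.mem_sup_left ⟨?_, hNn.conj_mem a ha.2 h'⟩)
      (Subgroup.mem_sup_right (hMn.conj_mem b hb h'))
    exact H.mul_mem (H.mul_mem hh' ha.1) (H.inv_mem hh')
  have keyM : ∀ m' ∈ M, ∀ x ∈ L, m' * x * m'⁻¹ ∈ L := by
    intro m' hm' x hx
    have : m' * x * m'⁻¹ = (m' * (x * m'⁻¹ * x⁻¹)) * x := by group
    rw [this]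
    exact L.mul_mem (hML (M.mul_mem hm' (hMn.conj_mem _ (M.inv_mem hm') x))) hx
  have hKnorm : K ≤ Subgroup.normalizer (L : Set G) := by
    refine sup_le ?_ ?_
    · intro h hh
      rw [Subgroup.mem_normalizer_iff]
      intro n
      constructor
      · exact fun hn => keyH h hh n hn
      · intro hn
        have := keyH h⁻¹ (H.inv_mem hh) _ hn
        have e : h⁻¹ * (h * n * h⁻¹) * h⁻¹⁻¹ = n := by group
        rwa [e] at this
    · intro m hm
      rw [Subgroup.mem_normalizer_iff]
      intro n
      constructor
      · exact fun hn => keyM m hm n hn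
      · intro hn
        have := keyM m⁻¹ (M.inv_mem hm) _ hn
        have e : m⁻¹ * (m * n * m⁻¹) * m⁻¹⁻¹ = n := by group
        rwa [e] at this
  have hLnorm : (L.subgroupOf K).Normal := by
    constructor
    intro n hn g
    rw [Subgroup.mem_subgroupOf] at hn ⊢
    have := (Subgroup.mem_normalizer_iff.mp (hKnorm g.2) (n : G)).mp hn
    simpa using this
  -- nontriviality / properness facts
  have hMsubbot : M.subgroupOf K ≠ ⊥ := by
    intro h
    rw [Subgroup.subgroupOf_eq_bot] at h
    exact hMbot (le_bot_iff.mp (le_trans (le_inf le_rfl hMK) h.le_bot))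
  refine ⟨hLnorm, hMn.subgroupOf K, ?_, ?_, hMsubbot, ?_, ?_, ?_⟩
  · intro h
    rw [Subgroup.subgroupOf_eq_bot] at h
    exact hMbot (le_bot_iff.mp (le_trans (le_inf hML hMK) h.le_bot))
  · intro h
    rw [Subgroup.subgroupOf_eq_top] at h
    exact hh0N (hLN (h (Subgroup.mem_sup_left hh0H)))
  · intro h
    rw [Subgroup.subgroupOf_eq_top] at h
    exact hh0N (hMN (h (Subgroup.mem_sup_left hh0H)))
  · intro x hx
    rw [Subgroup.mem_subgroupOf] at hx ⊢
    exact hML hx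
  · intro x hx hx1 y hy
    rw [Subgroup.mem_subgroupOf] at hx ⊢
    have hx1' : (x : G) ≠ 1 := fun h => hx1 (Subtype.ext h)
    have hcomm : (x : G) * (y : G) = (y : G) * (x : G) := by
      have := Subgroup.mem_centralizer_iff.mp hy x (Set.mem_singleton x)
      exact congrArg Subtype.val this
    have hyN : (y : G) ∈ N := by
      apply hcent (x : G) hx hx1'
      rw [Subgroup.mem_centralizer_iff]
      intro s hs
      rw [Set.mem_singleton_iff] at hs
      subst hs
      exact hcomm
    obtain ⟨a, ha, b, hb, hab⟩ := mem_sup_of_normal hMn y.2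
    have haN : a ∈ N := by
      have : a = (y : G) * b⁻¹ := by rw [hab]; group
      rw [this]
      exact N.mul_mem hyN (N.inv_mem (hMN hb))
    rw [hab]
    exact L.mul_mem (Subgroup.mem_sup_left ⟨ha, haN⟩) (hML hb)
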